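/- Let V be a vector space with complex structures J₊, J₋, metric g Hermitian for both, and let 𝔤 act with vectors X_ς, covectors ξ_ς satisfying J₊(X_ς + g⁻¹ξ_ς) = J₋(X_ς - g⁻¹ξ_ς) =: Y_ς. Define g₀ on the span of {X_ς, Y_ς} by g₀(X_ς,X_ζ) = g₀(Y_ς,Y_ζ) = g(X_ς,X_ζ) + g(g⁻¹ξ_ς, g⁻¹ξ_ζ) and g₀(X_ς,Y_ζ) = g(X_ς,Y_ζ), and J₀ by J₀X_ς = Y_ς, J₀Y_ς = -X_ς. Then g₀ is symmetric and Hermitian with respect to J₀: g₀(J₀u, J₀v) = g₀(u,v). -/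

import Mathlib

/-- Pointwise compatibility claim of Theorem 7.1: with
`Y_ς = J₊(X_ς + g⁻¹ξ_ς) = J₋(X_ς - g⁻¹ξ_ς)` and the skew condition
`ξ_ς(X_ζ) + ξ_ζ(X_ς) = 0`, the metric `g₀` defined by
`g₀(X_ς,X_ζ) = g₀(Y_ς,Y_ζ) = g(X_ς,X_ζ) + g(g⁻¹ξ_ς, g⁻¹ξ_ζ)` and
`g₀(X_ς,Y_ζ) = g(X_ς,Y_ζ)` is symmetric and Hermitian w.r.t. `J₀`
(`J₀X_ς = Y_ς`, `J₀Y_ς = -X_ς`); concretely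
`g(Y_ς,Y_ζ) = g(X_ς,X_ζ) + g(g⁻¹ξ_ς, g⁻¹ξ_ζ)` and
`g(X_ς,Y_ζ) + g(X_ζ,Y_ς) = 0`. -/
theorem stmt17
    {V 𝔤 : Type*} [NormedAddCommGroup V] [InnerProductSpace ℝ V]
    [AddCommGroup 𝔤] [Module ℝ 𝔤]
    (Jp Jm : V →ₗ[ℝ] V)
    (hJp2 : ∀ v, Jp (Jp v) = -v) (hJm2 : ∀ v, Jm (Jm v) = -v)
    (hJpO : ∀ u v : V, (inner ℝ (Jp u) (Jp v) : ℝ) = inner ℝ u v)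
    (hJmO : ∀ u v : V, (inner ℝ (Jm u) (Jm v) : ℝ) = inner ℝ u v)
    (X ξs : 𝔤 →ₗ[ℝ] V)
    (hY : ∀ ς, Jp (X ς + ξs ς) = Jm (X ς - ξs ς))
    (hskew : ∀ ς ζ, (inner ℝ (ξs ς) (X ζ) : ℝ) + inner ℝ (ξs ζ) (X ς) = 0) :
    (∀ ς ζ, (inner ℝ (Jp (X ς + ξs ς)) (Jp (X ζ + ξs ζ)) : ℝ)
        = inner ℝ (X ς) (X ζ) + inner ℝ (ξs ς) (ξs ζ)) ∧
      (∀ ς ζ, (inner ℝ (X ς) (Jp (X ζ + ξs ζ)) : ℝ)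
        + inner ℝ (X ζ) (Jp (X ς + ξs ς)) = 0) := by
  set Y : 𝔤 → V := fun ς => Jp (X ς + ξs ς) with hYdef
  constructor
  · intro ς ζ
    have h1 : (inner ℝ (Y ς) (Y ζ) : ℝ) = inner ℝ (X ς + ξs ς) (X ζ + ξs ζ) := hJpO _ _
    have h2 := hskew ς ζ
    have hc := real_inner_comm (ξs ζ) (X ς)
    have hc2 := real_inner_comm (ξs ς) (X ζ)
    rw [h1]
    simp only [inner_add_left, inner_add_right]
    linarith
  · intro ς ζ
    -- Jp (Y ζ) = -(X ζ + ξs ζ)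
    have hpA : ∀ ζ, Jp (Y ζ) = -(X ζ + ξs ζ) := fun ζ => hJp2 _
    have hmA : ∀ ζ, Jm (Y ζ) = -(X ζ - ξs ζ) := by
      intro ζ
      have : Y ζ = Jm (X ζ - ξs ζ) := hY ζ
      rw [this, hJm2]
    -- (A): ⟪Xς+ξς, Yζ⟫ = -⟪Yς, Xζ+ξζ⟫
    have hA : (inner ℝ (X ς + ξs ς) (Y ζ) : ℝ) = - inner ℝ (Y ς) (X ζ + ξs ζ) := by
      have := hJpO (X ς + ξs ς) (Y ζ)
      rw [hpA ζ] at this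
      rw [← this, inner_neg_right]
    -- (B): ⟪Xς-ξς, Yζ⟫ = -⟪Yς, Xζ-ξζ⟫
    have hB : (inner ℝ (X ς - ξs ς) (Y ζ) : ℝ) = - inner ℝ (Y ς) (X ζ - ξs ζ) := by
      have h := hJmO (X ς - ξs ς) (Y ζ)
      rw [hmA ζ] at h
      rw [← hY ς] at h
      rw [show Jp (X ς + ξs ς) = Y ς from rfl, inner_neg_right] at h
      linarith
    have hA' : (inner ℝ (X ς) (Y ζ) : ℝ) + inner ℝ (ξs ς) (Y ζ)
        = -(inner ℝ (Y ς) (X ζ) + inner ℝ (Y ς) (ξs ζ)) := by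
      rw [← inner_add_left, ← inner_add_right]; exact hA
    have hB' : (inner ℝ (X ς) (Y ζ) : ℝ) - inner ℝ (ξs ς) (Y ζ)
        = -(inner ℝ (Y ς) (X ζ) - inner ℝ (Y ς) (ξs ζ)) := by
      rw [← inner_sub_left, ← inner_sub_right]; exact hB
    have hc : (inner ℝ (Y ς) (X ζ) : ℝ) = inner ℝ (X ζ) (Y ς) := real_inner_comm _ _
    linarith
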